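/- Let $\{v_\ell\}_{\ell=1}^{N+1}$ be a strictly increasing sequence of extended reals and $\{p_\ell\}_{\ell=1}^{N+1}$ nonnegative weights summing to 1. If $V$ is a random variable with distribution $\sum_{\ell=1}^{N+1} p_\ell \delta_{v_\ell}$, then for every $\alpha \in [0,1)$, $1-\alpha \le \mathbb{P}(V \le q_{1-\alpha}) < 1-\alpha + \max_{k} p_k$, where $q_{1-\alpha} = \inf\{t : \mathbb{P}(V \le t) \ge 1-\alpha\}$ is the $(1-\alpha)$-quantile. -/

import Mathlib

open Classical in
/-- Coverage of the quantile of a finite discrete distribution on extended reals. -/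
theorem stmt_0 (N : ℕ) (v : Fin (N + 1) → EReal) (p : Fin (N + 1) → ℝ)
    (hv : StrictMono v) (hp : ∀ k, 0 ≤ p k) (hsum : ∑ k, p k = 1)
    (F : EReal → ℝ) (hF : ∀ t, F t = ∑ k, if v k ≤ t then p k else 0)
    (α : ℝ) (hα : α ∈ Set.Ico (0 : ℝ) 1)
    (q : EReal) (hq : q = sInf {t : EReal | 1 - α ≤ F t}) :
    1 - α ≤ F q ∧ F q < 1 - α + Finset.univ.sup' Finset.univ_nonempty p := by
  obtain ⟨hα0, hα1⟩ := hα
  have h1α : (0:ℝ) < 1 - α := by linarith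
  have hFv : ∀ k : Fin (N+1), F (v k) = ∑ j ∈ Finset.univ.filter (· ≤ k), p j := by
    intro k
    rw [hF, Finset.sum_filter]
    apply Finset.sum_congr rfl
    intro j _
    simp [hv.le_iff_le]
  have hFtop : F (v (Fin.last N)) = 1 := by
    rw [hF, ← hsum]
    apply Finset.sum_congr rfl
    intro k _
    simp [hv.monotone (Fin.le_last k)]
  set A : Finset (Fin (N+1)) := Finset.univ.filter (fun k => 1 - α ≤ F (v k)) with hA
  have hAne : A.Nonempty := ⟨Fin.last N, by simp [hA, hFtop]; linarith⟩
  set k₀ := A.min' hAne with hk0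
  have hk0A : k₀ ∈ A := A.min'_mem hAne
  have hk0F : 1 - α ≤ F (v k₀) := by
    have := hk0A
    rw [hA, Finset.mem_filter] at this
    exact this.2
  have hkey : ∀ t : EReal, t < v k₀ → F t < 1 - α := by
    intro t ht
    by_cases hex : ∃ k, v k ≤ t
    · set B : Finset (Fin (N+1)) := Finset.univ.filter (fun k => v k ≤ t) with hB
      have hBne : B.Nonempty := by
        obtain ⟨k, hk⟩ := hex; exact ⟨k, by simp [hB, hk]⟩
      set j := B.max' hBne with hj
      have hjB : v j ≤ t := (Finset.mem_filter.mp (B.max'_mem hBne)).2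
      have hFt : F t = F (v j) := by
        rw [hF, hF]
        apply Finset.sum_congr rfl
        intro k _
        congr 1
        simp only [eq_iff_iff]
        constructor
        · intro hk
          have hkj : k ≤ j := B.le_max' k (by simp [hB, hk])
          exact hv.monotone hkj
        · intro hk; exact le_trans hk hjB
      have hjk : j < k₀ := hv.lt_iff_lt.mp (lt_of_le_of_lt hjB ht)
      have hnA : j ∉ A := fun h => absurd (A.min'_le j h) (not_le.mpr hjk)
      rw [hA, Finset.mem_filter] at hnA
      push_neg at hnA
      have := hnA (Finset.mem_univ j)
      rw [hFt]; linarith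
    · push_neg at hex
      have hFt0 : F t = 0 := by
        rw [hF]
        apply Finset.sum_eq_zero
        intro k _
        simp [not_le.mpr (hex k)]
      rw [hFt0]; linarith
  have hq_eq : q = v k₀ := by
    rw [hq]
    apply le_antisymm
    · exact sInf_le hk0F
    · apply le_sInf
      intro t ht
      by_contra hlt
      exact absurd ht (not_le.mpr (hkey t (not_le.mp hlt)))
  rw [hq_eq]
  refine ⟨hk0F, ?_⟩
  have hsup : p k₀ ≤ Finset.univ.sup' Finset.univ_nonempty p :=
    Finset.le_sup' p (Finset.mem_univ k₀)
  have hsplit : F (v k₀) = (∑ j ∈ Finset.univ.filter (· < k₀), p j) + p k₀ := by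
    rw [hFv]
    have hins : Finset.univ.filter (· ≤ k₀) = insert k₀ (Finset.univ.filter (· < k₀)) := by
      ext k
      simp [le_iff_lt_or_eq, or_comm]
    rw [hins, Finset.sum_insert (by simp)]
    ring
  by_cases hk00 : k₀ = 0
  · have hempty : Finset.univ.filter (· < k₀) = ∅ := by
      ext k
      simp [hk00, Fin.not_lt_zero]
    have : F (v k₀) = p k₀ := by rw [hsplit, hempty]; simp
    rw [this]
    linarith
  · have hval : 0 < (k₀ : Fin (N+1)).val := Fin.pos_iff_ne_zero.mpr hk00
    set j : Fin (N+1) := ⟨k₀.val - 1, by omega⟩ with hjdef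
    have hjk : j < k₀ := by
      rw [Fin.lt_def]; show k₀.val - 1 < k₀.val; omega
    have hfilter : Finset.univ.filter (· < k₀) = Finset.univ.filter (· ≤ j) := by
      ext k
      simp only [Finset.mem_filter, Finset.mem_univ, true_and]
      rw [Fin.lt_def, Fin.le_def]
      simp [hjdef]
      omega
    have hFj : F (v j) < 1 - α := hkey (v j) (hv hjk)
    rw [hsplit, hfilter, ← hFv j]
    linarith
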